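/- Let M be an n×n real symmetric positive definite matrix. Then the matrix-valued function x ↦ x^{-1/2}(M + x·I)^{-1} is integrable on (0,∞), and the matrix T := (1/π) ∫₀^∞ x^{-1/2}(M + x·I)^{-1} dx is symmetric positive definite and satisfies T·M·T = I; that is, T is the inverse of the positive square root of M. -/

import Mathlib

open MeasureTheory

noncomputable section

/-- The matrix `T = (1/π) ∫₀^∞ x^{-1/2} (M + x·I)⁻¹ dx` (entrywise integral). -/
def sqrtInvIntegral (n : ℕ) (M : Matrix (Fin n) (Fin n) ℝ) : Matrix (Fin n) (Fin n) ℝ :=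
  Matrix.of fun i j =>
    (1 / Real.pi) * ∫ x in Set.Ioi (0 : ℝ), x ^ (-(1 : ℝ) / 2) * ((M + x • 1)⁻¹ i j)

open MeasureTheory Real Set

lemma aux_int2 (a : ℝ) (ha : 0 < a) :
    IntegrableOn (fun x : ℝ => (a + x ^ 2)⁻¹) (Ioi 0) := by
  have hb : (0:ℝ) < a ^ (-(1:ℝ)/2) := rpow_pos_of_pos ha _
  have h1 : IntegrableOn (fun x : ℝ => (1 + (x * a ^ (-(1:ℝ)/2)) ^ 2)⁻¹) (Ioi 0) := by
    have := (integrableOn_Ioi_comp_mul_right_iff (fun y : ℝ => (1 + y ^ 2)⁻¹) 0 hb)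
    rw [zero_mul] at this
    exact this.mpr integrable_inv_one_add_sq.integrableOn
  have h2 := h1.const_mul a⁻¹
  refine IntegrableOn.congr_fun h2 (fun x _ => ?_) measurableSet_Ioi
  have hsq : (a ^ (-(1:ℝ)/2)) ^ 2 = a⁻¹ := by
    rw [← rpow_natCast (a ^ (-(1:ℝ)/2)) 2, ← rpow_mul ha.le]
    norm_num [rpow_neg_one]
  have : (x * a ^ (-(1:ℝ)/2)) ^ 2 = x ^ 2 * a⁻¹ := by rw [mul_pow, hsq]
  rw [this]
  field_simp

lemma aux_integrable (a : ℝ) (ha : 0 < a) :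
    IntegrableOn (fun x : ℝ => x ^ (-(1:ℝ)/2) * (a + x)⁻¹) (Ioi 0) := by
  refine (integrableOn_Ioi_comp_rpow_iff' (fun x : ℝ => x ^ (-(1:ℝ)/2) * (a + x)⁻¹)
    (two_ne_zero)).mp ?_
  refine IntegrableOn.congr_fun (aux_int2 a ha) (fun x hx => ?_) measurableSet_Ioi
  have hx0 : (0:ℝ) < x := hx
  have h1 : (x ^ (2:ℝ)) ^ (-(1:ℝ)/2) = x⁻¹ := by
    rw [← rpow_mul hx0.le]
    norm_num [rpow_neg_one]
  have h2 : x ^ (2:ℝ) = x ^ 2 := by rw [← rpow_natCast x 2]; norm_num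
  rw [smul_eq_mul, h1, h2]
  norm_num [rpow_one]
  rw [← mul_assoc, mul_inv_cancel₀ hx0.ne', one_mul]

lemma aux_eval (a : ℝ) (ha : 0 < a) :
    ∫ x in Ioi (0:ℝ), x ^ (-(1:ℝ)/2) * (a + x)⁻¹ = π * a ^ (-(1:ℝ)/2) := by
  have hb : (0:ℝ) < a ^ (-(1:ℝ)/2) := rpow_pos_of_pos ha _
  rw [← integral_comp_rpow_Ioi_of_pos (g := fun x : ℝ => x ^ (-(1:ℝ)/2) * (a + x)⁻¹) zero_lt_two]
  have step : ∀ x ∈ Ioi (0:ℝ),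
      ((2:ℝ) * x ^ ((2:ℝ)-1)) • ((x ^ (2:ℝ)) ^ (-(1:ℝ)/2) * (a + x ^ (2:ℝ))⁻¹)
      = 2 * a⁻¹ * (1 + (x * a ^ (-(1:ℝ)/2)) ^ 2)⁻¹ := by
    intro x hx
    have hx0 : (0:ℝ) < x := hx
    have h1 : (x ^ (2:ℝ)) ^ (-(1:ℝ)/2) = x⁻¹ := by
      rw [← rpow_mul hx0.le]; norm_num [rpow_neg_one]
    have h2 : x ^ (2:ℝ) = x ^ 2 := by rw [← rpow_natCast x 2]; norm_num
    have hsq : (a ^ (-(1:ℝ)/2)) ^ 2 = a⁻¹ := by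
      rw [← rpow_natCast (a ^ (-(1:ℝ)/2)) 2, ← rpow_mul ha.le]; norm_num [rpow_neg_one]
    rw [smul_eq_mul, h1, h2, mul_pow, hsq]
    norm_num [rpow_one]
    rw [mul_assoc, ← mul_assoc x x⁻¹, mul_inv_cancel₀ hx0.ne', one_mul]
    have hax : 0 < a + x ^ 2 := by positivity
    rw [show 1 + x ^ 2 * a⁻¹ = a⁻¹ * (a + x ^ 2) by field_simp, mul_inv,
      inv_inv]
    field_simp
  rw [setIntegral_congr_fun measurableSet_Ioi step, MeasureTheory.integral_const_mul]
  have hcm := integral_comp_mul_right_Ioi (fun y : ℝ => (1 + y ^ 2)⁻¹) 0 hb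
  rw [zero_mul] at hcm
  rw [hcm, integral_Ioi_inv_one_add_sq, arctan_zero, sub_zero, smul_eq_mul]
  have hb' : (a ^ (-(1:ℝ)/2))⁻¹ = a ^ ((1:ℝ)/2) := by
    rw [← rpow_neg ha.le]; norm_num
  have hkey : a⁻¹ * a ^ ((1:ℝ)/2) = a ^ (-(1:ℝ)/2) := by
    rw [← rpow_neg_one a, ← rpow_add ha]; norm_num
  rw [hb', show (2:ℝ) * a⁻¹ * (a ^ ((1:ℝ)/2) * (π/2)) = π * (a⁻¹ * a ^ ((1:ℝ)/2)) from by ring,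
    hkey]

open Matrix in
lemma conj_entry {n : ℕ} (U : Matrix (Fin n) (Fin n) ℝ) (d : Fin n → ℝ) (i j : Fin n) :
    (U * Matrix.diagonal d * star U) i j = ∑ k, U i k * d k * U j k := by
  rw [Matrix.mul_apply]
  congr 1; ext k
  rw [Matrix.mul_diagonal, Matrix.star_apply, star_trivial]

open Matrix in
lemma conj_mul_conj {n : ℕ} {U : Matrix (Fin n) (Fin n) ℝ} (hU : star U * U = 1)
    (d e : Fin n → ℝ) :
    (U * Matrix.diagonal d * star U) * (U * Matrix.diagonal e * star U)
      = U * Matrix.diagonal (fun k => d k * e k) * star U := by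
  have : Matrix.diagonal d * Matrix.diagonal e = Matrix.diagonal (fun k => d k * e k) := by
    rw [Matrix.diagonal_mul_diagonal]
  calc (U * Matrix.diagonal d * star U) * (U * Matrix.diagonal e * star U)
      = U * Matrix.diagonal d * ((star U * U) * (Matrix.diagonal e * star U)) := by
        simp only [Matrix.mul_assoc]
    _ = U * (Matrix.diagonal d * Matrix.diagonal e) * star U := by
        rw [hU, one_mul, ← Matrix.mul_assoc, ← Matrix.mul_assoc]
    _ = U * Matrix.diagonal (fun k => d k * e k) * star U := by rw [this]

open Matrix in
lemma posDef_conj {n : ℕ} {A U : Matrix (Fin n) (Fin n) ℝ} (hA : A.PosDef)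
    (hU : IsUnit U) : (U * A * star U).PosDef := by
  refine Matrix.PosDef.of_dotProduct_mulVec_pos ?_ (fun x hx => ?_)
  · have := Matrix.isHermitian_mul_mul_conjTranspose U hA.1
    simpa [Matrix.star_eq_conjTranspose] using this
  · have hinj : Function.Injective (star U).mulVec :=
      Matrix.mulVec_injective_iff_isUnit.mpr (by simpa using hU.star)
    have hx' : (star U) *ᵥ x ≠ 0 := fun h => hx (by simpa using hinj (by simpa using h))
    have := hA.dotProduct_mulVec_pos hx'
    simpa only [star_mulVec, Matrix.star_eq_conjTranspose, dotProduct_mulVec,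
      vecMul_vecMul, Matrix.mul_assoc, ← Matrix.mulVec_mulVec,
      Matrix.conjTranspose_conjTranspose] using this


theorem inverse_sqrt_integral_representation (n : ℕ) (M : Matrix (Fin n) (Fin n) ℝ)
    (hM : M.PosDef) :
    (∀ i j : Fin n, IntegrableOn
        (fun x : ℝ => x ^ (-(1 : ℝ) / 2) * ((M + x • 1)⁻¹ i j)) (Set.Ioi 0)) ∧
    (sqrtInvIntegral n M).IsSymm ∧ (sqrtInvIntegral n M).PosDef ∧
    sqrtInvIntegral n M * M * sqrtInvIntegral n M = 1 := by
  classical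
  have hH : M.IsHermitian := hM.1
  set U : Matrix (Fin n) (Fin n) ℝ := (hH.eigenvectorUnitary : Matrix (Fin n) (Fin n) ℝ)
    with hUdef
  set μ : Fin n → ℝ := hH.eigenvalues with hμdef
  have hμpos : ∀ k, 0 < μ k := fun k => hM.eigenvalues_pos k
  have hU2 : U * star U = 1 := Matrix.mem_unitaryGroup_iff.mp hH.eigenvectorUnitary.2
  have hU1 : star U * U = 1 := Matrix.mem_unitaryGroup_iff'.mp hH.eigenvectorUnitary.2
  have spec : M = U * Matrix.diagonal μ * star U := by
    conv_lhs => rw [hH.spectral_theorem]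
    rw [Unitary.conjStarAlgAut_apply, RCLike.ofReal_real_eq_id, Function.id_comp]
  -- the resolvent in diagonalized form
  have hMx : ∀ x : ℝ, 0 < x → M + x • 1 = U * Matrix.diagonal (fun k => μ k + x) * star U := by
    intro x hx
    have hd : Matrix.diagonal (fun k => μ k + x)
        = Matrix.diagonal μ + x • (1 : Matrix (Fin n) (Fin n) ℝ) := by
      rw [Matrix.smul_one_eq_diagonal, Matrix.diagonal_add]
    rw [hd, Matrix.mul_add, Matrix.add_mul, ← spec]
    congr 1
    rw [Matrix.mul_smul, Matrix.mul_one, Matrix.smul_mul, hU2]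
  have hinv : ∀ x : ℝ, 0 < x →
      (M + x • 1)⁻¹ = U * Matrix.diagonal (fun k => (μ k + x)⁻¹) * star U := by
    intro x hx
    apply Matrix.inv_eq_right_inv
    rw [hMx x hx, conj_mul_conj hU1]
    have h1 : (fun k => (μ k + x) * (μ k + x)⁻¹) = fun _ => (1:ℝ) := by
      funext k; exact mul_inv_cancel₀ (by have := hμpos k; positivity)
    rw [h1, Matrix.diagonal_one, Matrix.mul_one, hU2]
  -- entrywise expansion on `Ioi 0`
  have hEq : ∀ (i j : Fin n), ∀ x ∈ Ioi (0:ℝ),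
      x ^ (-(1 : ℝ) / 2) * ((M + x • 1)⁻¹ i j)
        = ∑ k, U i k * U j k * (x ^ (-(1 : ℝ) / 2) * (μ k + x)⁻¹) := by
    intro i j x hx
    rw [hinv x hx, conj_entry, Finset.mul_sum]
    refine Finset.sum_congr rfl fun k _ => by ring
  have hIntSum : ∀ (i j : Fin n), IntegrableOn
      (fun x : ℝ => ∑ k, U i k * U j k * (x ^ (-(1 : ℝ) / 2) * (μ k + x)⁻¹)) (Ioi 0) :=
    fun i j => integrable_finset_sum _
      (fun k _ => (aux_integrable (μ k) (hμpos k)).const_mul _)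
  have hInt : ∀ i j : Fin n, IntegrableOn
      (fun x : ℝ => x ^ (-(1 : ℝ) / 2) * ((M + x • 1)⁻¹ i j)) (Set.Ioi 0) := by
    intro i j
    exact IntegrableOn.congr_fun (hIntSum i j) (fun x hx => (hEq i j x hx).symm)
      measurableSet_Ioi
  -- identify T
  have hT : sqrtInvIntegral n M
      = U * Matrix.diagonal (fun k => μ k ^ (-(1:ℝ)/2)) * star U := by
    ext i j
    show (1 / π) * ∫ x in Ioi (0:ℝ), x ^ (-(1 : ℝ) / 2) * ((M + x • 1)⁻¹ i j) = _
    rw [setIntegral_congr_fun measurableSet_Ioi (hEq i j),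
      integral_finset_sum _ (fun k _ => (aux_integrable (μ k) (hμpos k)).const_mul _)]
    have hterm : ∀ k, ∫ x in Ioi (0:ℝ), U i k * U j k * (x ^ (-(1 : ℝ) / 2) * (μ k + x)⁻¹)
        = U i k * U j k * (π * μ k ^ (-(1:ℝ)/2)) := by
      intro k
      rw [MeasureTheory.integral_const_mul, aux_eval (μ k) (hμpos k)]
    simp_rw [hterm]
    rw [conj_entry, Finset.mul_sum]
    refine Finset.sum_congr rfl fun k _ => ?_
    field_simp
  refine ⟨hInt, ?_, ?_, ?_⟩
  · rw [hT, Matrix.star_eq_conjTranspose, Matrix.IsSymm,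
      ← Matrix.conjTranspose_eq_transpose_of_trivial]
    exact Matrix.isHermitian_mul_mul_conjTranspose U
      (Matrix.isHermitian_diagonal (fun k => μ k ^ (-(1:ℝ)/2)))
  · rw [hT]
    exact posDef_conj
      (Matrix.posDef_diagonal_iff.mpr fun k => rpow_pos_of_pos (hμpos k) _)
      ⟨Unitary.toUnits hH.eigenvectorUnitary, rfl⟩
  · rw [hT, spec, conj_mul_conj hU1, conj_mul_conj hU1]
    have h1 : (fun k => (fun k => μ k ^ (-(1:ℝ)/2) * μ k) k * μ k ^ (-(1:ℝ)/2))
        = fun _ => (1:ℝ) := by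
      funext k
      have hk := hμpos k
      have haa : μ k ^ (-(1:ℝ)/2) * μ k ^ (-(1:ℝ)/2) = (μ k)⁻¹ := by
        rw [← rpow_add hk]; norm_num [rpow_neg_one]
      calc μ k ^ (-(1:ℝ)/2) * μ k * μ k ^ (-(1:ℝ)/2)
          = μ k * (μ k ^ (-(1:ℝ)/2) * μ k ^ (-(1:ℝ)/2)) := by ring
        _ = μ k * (μ k)⁻¹ := by rw [haa]
        _ = 1 := mul_inv_cancel₀ hk.ne'
    rw [h1, Matrix.diagonal_one, Matrix.mul_one, hU2]
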